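/- Let V be a finite-dimensional real vector space, D ⊆ V ⊕ V* maximally isotropic, S ⊆ V ⊕ V* isotropic, and D^S := (D ∩ S⊥) + S. If D' ⊆ V ⊕ V* is any maximally isotropic subspace with S ⊆ D', then D' ∩ D ⊆ D^S ∩ D; moreover D' ∩ D = D^S ∩ D if and only if D' = D^S. -/

import Mathlib

/-- The orthogonal complement of a subspace `E ⊆ V ⊕ V*` with respect to the canonical
symmetric pairing `⟨(X,ξ),(Y,ζ)⟩ = ζ(X) + ξ(Y)`. -/
def perp {V : Type*} [AddCommGroup V] [Module ℝ V]
    (E : Submodule ℝ (V × Module.Dual ℝ V)) :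
    Submodule ℝ (V × Module.Dual ℝ V) where
  carrier := {p | ∀ q ∈ E, q.2 p.1 + p.2 q.1 = 0}
  add_mem' := by
    intro a b ha hb q hq
    have h1 := ha q hq
    have h2 := hb q hq
    simp only [Prod.fst_add, Prod.snd_add, map_add, LinearMap.add_apply]
    linarith
  zero_mem' := by
    intro q hq
    simp
  smul_mem' := by
    intro c a ha q hq
    have h := ha q hq
    simp only [Prod.smul_fst, Prod.smul_snd, map_smul, LinearMap.smul_apply, smul_eq_mul]
    rw [← mul_add, h, mul_zero]

section Aux

variable {V : Type*} [AddCommGroup V] [Module ℝ V]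

/-- The canonical pairing as a bilinear form. -/
noncomputable def canB (V : Type*) [AddCommGroup V] [Module ℝ V] :
    LinearMap.BilinForm ℝ (V × Module.Dual ℝ V) :=
  LinearMap.mk₂ ℝ (fun p q => q.2 p.1 + p.2 q.1)
    (by intro p p' q; simp only [Prod.fst_add, Prod.snd_add, map_add, LinearMap.add_apply]; ring)
    (by intro c p q; simp only [Prod.smul_fst, Prod.smul_snd, map_smul, LinearMap.smul_apply,
      smul_eq_mul]; ring)
    (by intro p q q'; simp only [Prod.fst_add, Prod.snd_add, map_add, LinearMap.add_apply]; ring)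
    (by intro c p q; simp only [Prod.smul_fst, Prod.smul_snd, map_smul, LinearMap.smul_apply,
      smul_eq_mul]; ring)

lemma canB_apply (p q : V × Module.Dual ℝ V) : canB V p q = q.2 p.1 + p.2 q.1 := rfl

lemma canB_refl : (canB V).IsRefl := by
  intro p q h
  rw [canB_apply] at h ⊢
  linarith

lemma canB_nondeg : (canB V).Nondegenerate := by
  refine (LinearMap.IsRefl.nondegenerate_iff_separatingLeft (B := canB V)
    (fun p q h => canB_refl p q h)).2 ?_
  intro p hp
  have h1 : p.1 = 0 := by
    rw [← Module.forall_dual_apply_eq_zero_iff ℝ]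
    intro φ
    have := hp (0, φ)
    simpa [canB_apply] using this
  have h2 : p.2 = 0 := by
    ext y
    have := hp (y, 0)
    simpa [canB_apply] using this
  exact Prod.ext h1 h2

lemma perp_eq (E : Submodule ℝ (V × Module.Dual ℝ V)) :
    perp E = (canB V).orthogonal E := by
  ext p
  constructor
  · intro hp q hq
    have := hp q hq
    simp only [LinearMap.BilinForm.IsOrtho, canB_apply]
    linarith
  · intro hp q hq
    have := hp q hq
    simp only [LinearMap.BilinForm.IsOrtho, canB_apply] at this
    linarith

lemma perp_anti {A B : Submodule ℝ (V × Module.Dual ℝ V)} (h : A ≤ B) : perp B ≤ perp A :=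
  fun p hp q hq => hp q (h hq)

lemma le_perp_perp (A : Submodule ℝ (V × Module.Dual ℝ V)) : A ≤ perp (perp A) := by
  intro a ha q hq
  have := hq a ha
  linarith

lemma perp_sup (A B : Submodule ℝ (V × Module.Dual ℝ V)) :
    perp (A ⊔ B) = perp A ⊓ perp B := by
  apply le_antisymm
  · exact le_inf (perp_anti le_sup_left) (perp_anti le_sup_right)
  · rintro p ⟨hpA, hpB⟩ q hq
    obtain ⟨a, ha, b, hb, rfl⟩ := Submodule.mem_sup.1 hq
    have h1 := hpA a ha
    have h2 := hpB b hb
    simp only [Prod.fst_add, Prod.snd_add, map_add, LinearMap.add_apply]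
    linarith

variable [FiniteDimensional ℝ V]

lemma perp_perp (A : Submodule ℝ (V × Module.Dual ℝ V)) : perp (perp A) = A := by
  rw [perp_eq, perp_eq]
  exact LinearMap.BilinForm.orthogonal_orthogonal canB_nondeg canB_refl A

lemma perp_inf (A B : Submodule ℝ (V × Module.Dual ℝ V)) :
    perp (A ⊓ B) = perp A ⊔ perp B := by
  conv_lhs => rw [← perp_perp A, ← perp_perp B, ← perp_sup, perp_perp]

/-- `D^S` is maximally isotropic. -/
lemma perp_DS (D S : Submodule ℝ (V × Module.Dual ℝ V))
    (hD : perp D = D) (hS : S ≤ perp S) :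
    perp ((D ⊓ perp S) ⊔ S) = (D ⊓ perp S) ⊔ S := by
  apply le_antisymm
  · rw [perp_sup, perp_inf, hD, perp_perp]
    rintro x ⟨hds, hp⟩
    obtain ⟨d, hd, s, hsS, rfl⟩ := Submodule.mem_sup.1 hds
    have hdp : d ∈ perp S := by
      have : (d + s) - s ∈ perp S := Submodule.sub_mem _ hp (hS hsS)
      simpa using this
    exact Submodule.add_mem _ (Submodule.mem_sup_left ⟨hd, hdp⟩) (Submodule.mem_sup_right hsS)
  · rw [perp_sup, perp_inf, hD, perp_perp]
    exact sup_le (le_inf (le_trans inf_le_left le_sup_left) inf_le_right)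
      (le_inf le_sup_right hS)

end Aux

/-- Let `V` be a finite-dimensional real vector space, `D ⊆ V ⊕ V*`
maximally isotropic, `S ⊆ V ⊕ V*` isotropic, and `D^S := (D ⊓ S⊥) + S`. If `D'` is any
maximally isotropic subspace with `S ⊆ D'`, then `D' ∩ D ⊆ D^S ∩ D`; moreover
`D' ∩ D = D^S ∩ D` if and only if `D' = D^S`. -/
theorem stmt_7 {V : Type*} [AddCommGroup V] [Module ℝ V] [FiniteDimensional ℝ V]
    (D S D' : Submodule ℝ (V × Module.Dual ℝ V))
    (hD : perp D = D) (hS : S ≤ perp S)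
    (hD' : perp D' = D') (hSD' : S ≤ D') :
    D' ⊓ D ≤ ((D ⊓ perp S) ⊔ S) ⊓ D ∧
    (D' ⊓ D = ((D ⊓ perp S) ⊔ S) ⊓ D ↔ D' = (D ⊓ perp S) ⊔ S) := by
  constructor
  · rintro x ⟨hx', hxD⟩
    have hxp : x ∈ perp S := by
      rw [← hD'] at hx'
      exact fun q hq => hx' q (hSD' hq)
    exact ⟨Submodule.mem_sup_left ⟨hxD, hxp⟩, hxD⟩
  · constructor
    · intro h
      have h1 : D ⊓ perp S ≤ D' := by
        have : D ⊓ perp S ≤ D' ⊓ D := by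
          rw [h]; exact le_inf le_sup_left inf_le_left
        exact le_trans this inf_le_left
      have hle : (D ⊓ perp S) ⊔ S ≤ D' := sup_le h1 hSD'
      have hge : D' ≤ (D ⊓ perp S) ⊔ S := by
        rw [← hD', ← perp_DS D S hD hS]
        exact perp_anti hle
      exact le_antisymm hge hle
    · rintro rfl; rfl
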